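/- Let P_1,…,P_s ∈ ℤ[x_1,…,x_r] (s ≥ 2, r ≥ 1) be nonzero polynomials with no common zero in ℂ^r. Then the set 𝒟 = {d_n : n ∈ ℤ^r} is a finite set of positive integers stable under gcd and lcm; in particular its smallest element divides every element of 𝒟 and its largest element is a multiple of every element of 𝒟. -/

import Mathlib

open MvPolynomial

lemma aux_eval_congr {r : ℕ} (p : MvPolynomial (Fin r) ℤ) (M : ℤ) (n m : Fin r → ℤ)
    (h : ∀ j, M ∣ n j - m j) : M ∣ eval n p - eval m p := by
  induction p using MvPolynomial.induction_on with
  | C a => simp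
  | add p q hp hq =>
      have : M ∣ (eval n p - eval m p) + (eval n q - eval m q) := dvd_add hp hq
      convert this using 1
      simp only [map_add]; ring
  | mul_X p j hp =>
      have h2 := h j
      have e : eval n (p * X j) - eval m (p * X j)
          = (eval n p - eval m p) * n j + eval m p * (n j - m j) := by
        simp only [map_mul, eval_X]; ring
      rw [e]
      exact dvd_add (hp.mul_right _) (h2.mul_left _)

lemma aux_gcd_dvd_congr {s : ℕ} (f g : Fin s → ℤ) (M : ℤ)
    (h : ∀ i, M ∣ f i - g i) :
    gcd M (Finset.univ.gcd f) ∣ gcd M (Finset.univ.gcd g) := by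
  apply dvd_gcd (gcd_dvd_left _ _)
  apply Finset.dvd_gcd
  intro i _
  have h1 : gcd M (Finset.univ.gcd f) ∣ f i :=
    (gcd_dvd_right _ _).trans (Finset.gcd_dvd (Finset.mem_univ i))
  have h2 : gcd M (Finset.univ.gcd f) ∣ f i - g i := (gcd_dvd_left _ _).trans (h i)
  have := dvd_sub h1 h2
  simpa using this

lemma aux_int_gcd_nonneg (a b : ℤ) : 0 ≤ gcd a b := by
  rw [← Int.coe_gcd]; positivity

lemma aux_gcd_congr {s : ℕ} (f g : Fin s → ℤ) (M : ℤ)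
    (h : ∀ i, M ∣ f i - g i) :
    gcd M (Finset.univ.gcd f) = gcd M (Finset.univ.gcd g) := by
  refine Int.dvd_antisymm (aux_int_gcd_nonneg _ _) (aux_int_gcd_nonneg _ _)
    (aux_gcd_dvd_congr f g M h) (aux_gcd_dvd_congr g f M ?_)
  intro i
  have := dvd_neg.2 (h i)
  simpa [neg_sub] using this

lemma aux_crt (u v : ℕ) (h : Nat.Coprime u v) (a b : ℤ) :
    ∃ t : ℤ, (u:ℤ) ∣ t - a ∧ (v:ℤ) ∣ t - b := by
  have hcop : IsCoprime (u:ℤ) (v:ℤ) := by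
    rw [Int.isCoprime_iff_gcd_eq_one, Int.gcd_natCast_natCast]
    exact h
  obtain ⟨c, d, hcd⟩ := hcop
  refine ⟨a*d*v + b*c*u, ⟨c*(b-a), by linear_combination a * hcd⟩,
    ⟨d*(a-b), by linear_combination b * hcd⟩⟩

lemma aux_split (D : ℕ) (hD : D ≠ 0) : ∀ a b : ℕ, a ∣ D → b ∣ D →
    (∃ u v : ℕ, u * v = D ∧ Nat.Coprime u v ∧
      Nat.gcd a u * Nat.gcd b v = Nat.gcd a b) ∧
    (∃ u v : ℕ, u * v = D ∧ Nat.Coprime u v ∧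
      Nat.gcd a u * Nat.gcd b v = Nat.lcm a b) := by
  induction D using Nat.strong_induction_on with
  | _ D IH =>
  intro a b ha hb
  have ha0 : a ≠ 0 := fun h => hD (by simpa [h] using ha)
  have hb0 : b ≠ 0 := fun h => hD (by simpa [h] using hb)
  rcases eq_or_ne D 1 with h1 | h1
  · subst h1
    have ha1 : a = 1 := Nat.eq_one_of_dvd_one ha
    have hb1 : b = 1 := Nat.eq_one_of_dvd_one hb
    subst ha1; subst hb1
    exact ⟨⟨1, 1, by simp, by simp [Nat.coprime_one_left], by simp⟩,
      ⟨1, 1, by simp, by simp [Nat.coprime_one_left], by simp [Nat.lcm]⟩⟩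
  · obtain ⟨p, hp, hpD⟩ := Nat.exists_prime_and_dvd h1
    set k := D.factorization p with hk
    set Pk := p ^ k with hPk
    set D' := D / Pk with hD'
    have hsplit : Pk * D' = D := Nat.ordProj_mul_ordCompl_eq_self D p
    have hcpD' : Nat.Coprime p D' := Nat.coprime_ordCompl hp hD
    have hcop : Nat.Coprime Pk D' := hcpD'.pow_left _
    have hD'0 : D' ≠ 0 := by
      intro h; rw [h, mul_zero] at hsplit; exact hD hsplit.symm
    have hPk1 : 1 < Pk := by
      have hk1 : 1 ≤ k := (Nat.Prime.factorization_pos_of_dvd hp hD hpD)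
      calc 1 < p := hp.one_lt
      _ = p ^ 1 := (pow_one p).symm
      _ ≤ Pk := Nat.pow_le_pow_right hp.pos hk1
    have hlt : D' < D := by
      rw [← hsplit]
      calc D' = 1 * D' := (one_mul _).symm
      _ < Pk * D' := by
        apply Nat.mul_lt_mul_of_lt_of_le hPk1 le_rfl (Nat.pos_of_ne_zero hD'0)
    -- decompositions
    set α := Nat.gcd a Pk with hα
    set β := Nat.gcd b Pk with hβ
    set a' := Nat.gcd a D' with ha'
    set b' := Nat.gcd b D' with hb'
    have hadec : a = α * a' := by
      conv_lhs => rw [← Nat.gcd_eq_left ha, ← hsplit, Nat.Coprime.gcd_mul _ hcop]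
    have hbdec : b = β * b' := by
      conv_lhs => rw [← Nat.gcd_eq_left hb, ← hsplit, Nat.Coprime.gcd_mul _ hcop]
    have hαP : α ∣ Pk := Nat.gcd_dvd_right _ _
    have hβP : β ∣ Pk := Nat.gcd_dvd_right _ _
    have ha'D : a' ∣ D' := Nat.gcd_dvd_right _ _
    have hb'D : b' ∣ D' := Nat.gcd_dvd_right _ _
    obtain ⟨i, hi, hαi⟩ := (Nat.dvd_prime_pow hp).1 hαP
    obtain ⟨j, hj, hβj⟩ := (Nat.dvd_prime_pow hp).1 hβP
    have hdich : α ∣ β ∨ β ∣ α := by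
      rcases le_total i j with h | h
      · exact Or.inl (hαi ▸ hβj ▸ pow_dvd_pow p h)
      · exact Or.inr (hαi ▸ hβj ▸ pow_dvd_pow p h)
    obtain ⟨⟨u1, v1, huv1, hcop1, hg1⟩, ⟨u2, v2, huv2, hcop2, hg2⟩⟩ :=
      IH D' hlt hD'0 a' b' ha'D hb'D
    have hu1 : u1 ∣ D' := ⟨v1, huv1.symm⟩
    have hv1 : v1 ∣ D' := ⟨u1, by rw [← huv1, mul_comm]⟩
    have hu2 : u2 ∣ D' := ⟨v2, huv2.symm⟩
    have hv2 : v2 ∣ D' := ⟨u2, by rw [← huv2, mul_comm]⟩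
    -- coprimality facts
    have cPu1 : Nat.Coprime Pk u1 := Nat.Coprime.coprime_dvd_right hu1 hcop
    have cPv1 : Nat.Coprime Pk v1 := Nat.Coprime.coprime_dvd_right hv1 hcop
    have cPu2 : Nat.Coprime Pk u2 := Nat.Coprime.coprime_dvd_right hu2 hcop
    have cPv2 : Nat.Coprime Pk v2 := Nat.Coprime.coprime_dvd_right hv2 hcop
    have cαu1 : Nat.Coprime α u1 := Nat.Coprime.coprime_dvd_left hαP cPu1
    have cβv1 : Nat.Coprime β v1 := Nat.Coprime.coprime_dvd_left hβP cPv1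
    have cαu2 : Nat.Coprime α u2 := Nat.Coprime.coprime_dvd_left hαP cPu2
    have cβv2 : Nat.Coprime β v2 := Nat.Coprime.coprime_dvd_left hβP cPv2
    have ca'β : Nat.Coprime a' β :=
      (hcop.symm.coprime_dvd_left ha'D).coprime_dvd_right hβP
    have cαb' : Nat.Coprime α b' :=
      (hcop.coprime_dvd_left hαP).coprime_dvd_right hb'D
    have cβb' : Nat.Coprime β b' :=
      (hcop.coprime_dvd_left hβP).coprime_dvd_right hb'D
    have cαa' : Nat.Coprime α a' :=
      (hcop.coprime_dvd_left hαP).coprime_dvd_right ha'D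
    have hgab : Nat.gcd a b = Nat.gcd α β * Nat.gcd a' b' := by
      rw [hbdec, Nat.Coprime.gcd_mul _ cβb', hadec,
        Nat.Coprime.gcd_mul_right_cancel α ca'β,
        Nat.Coprime.gcd_mul_left_cancel a' cαb']
    have hα0 : α ≠ 0 := fun h => ha0 (by simp [hadec, h])
    have hβ0 : β ≠ 0 := fun h => hb0 (by simp [hbdec, h])
    have ha'0 : a' ≠ 0 := fun h => ha0 (by simp [hadec, h])
    have hb'0 : b' ≠ 0 := fun h => hb0 (by simp [hbdec, h])
    have hlab : Nat.lcm a b = Nat.lcm α β * Nat.lcm a' b' := by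
      have hgcd0 : Nat.gcd α β * Nat.gcd a' b' ≠ 0 := by
        apply mul_ne_zero <;> simp [Nat.gcd_eq_zero_iff, hα0, ha'0]
      apply Nat.eq_of_mul_eq_mul_left (Nat.pos_of_ne_zero hgcd0)
      calc Nat.gcd α β * Nat.gcd a' b' * Nat.lcm a b
          = Nat.gcd a b * Nat.lcm a b := by rw [hgab]
        _ = a * b := Nat.gcd_mul_lcm a b
        _ = (Nat.gcd α β * Nat.lcm α β) * (Nat.gcd a' b' * Nat.lcm a' b') := by
            rw [Nat.gcd_mul_lcm, Nat.gcd_mul_lcm, hadec, hbdec]; ring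
        _ = Nat.gcd α β * Nat.gcd a' b' * (Nat.lcm α β * Nat.lcm a' b') := by ring
    have eau1 : Nat.gcd a u1 = Nat.gcd a' u1 := by
      rw [hadec, Nat.Coprime.gcd_mul_left_cancel a' cαu1]
    have ebv1 : Nat.gcd b v1 = Nat.gcd b' v1 := by
      rw [hbdec, Nat.Coprime.gcd_mul_left_cancel b' cβv1]
    have eau2 : Nat.gcd a u2 = Nat.gcd a' u2 := by
      rw [hadec, Nat.Coprime.gcd_mul_left_cancel a' cαu2]
    have ebv2 : Nat.gcd b v2 = Nat.gcd b' v2 := by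
      rw [hbdec, Nat.Coprime.gcd_mul_left_cancel b' cβv2]
    have eaPu1 : Nat.gcd a (Pk * u1) = α * Nat.gcd a' u1 := by
      rw [Nat.Coprime.gcd_mul _ cPu1, eau1, ← hα]
    have ebPv1 : Nat.gcd b (Pk * v1) = β * Nat.gcd b' v1 := by
      rw [Nat.Coprime.gcd_mul _ cPv1, ebv1, ← hβ]
    have eaPu2 : Nat.gcd a (Pk * u2) = α * Nat.gcd a' u2 := by
      rw [Nat.Coprime.gcd_mul _ cPu2, eau2, ← hα]
    have ebPv2 : Nat.gcd b (Pk * v2) = β * Nat.gcd b' v2 := by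
      rw [Nat.Coprime.gcd_mul _ cPv2, ebv2, ← hβ]
    constructor
    · rcases hdich with hab | hba
      · refine ⟨Pk * u1, v1, by rw [mul_assoc, huv1, hsplit], Nat.Coprime.mul cPv1 hcop1, ?_⟩
        rw [eaPu1, ebv1, hgab, Nat.gcd_eq_left hab, mul_assoc, hg1]
      · refine ⟨u1, Pk * v1, by rw [mul_comm Pk v1, ← mul_assoc, huv1, mul_comm, hsplit],
          Nat.Coprime.mul_right cPu1.symm hcop1, ?_⟩
        rw [eau1, ebPv1, hgab, Nat.gcd_eq_right hba, ← hg1]; ring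
    · rcases hdich with hab | hba
      · refine ⟨u2, Pk * v2, by rw [mul_comm Pk v2, ← mul_assoc, huv2, mul_comm, hsplit],
          Nat.Coprime.mul_right cPu2.symm hcop2, ?_⟩
        have hlαβ : Nat.lcm α β = β :=
          Nat.dvd_antisymm (Nat.lcm_dvd hab dvd_rfl) (Nat.dvd_lcm_right _ _)
        rw [eau2, ebPv2, hlab, hlαβ, ← hg2]; ring
      · refine ⟨Pk * u2, v2, by rw [mul_assoc, huv2, hsplit], Nat.Coprime.mul cPv2 hcop2, ?_⟩
        have hlαβ : Nat.lcm α β = α :=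
          Nat.dvd_antisymm (Nat.lcm_dvd dvd_rfl hba) (Nat.dvd_lcm_left _ _)
        rw [eaPu2, ebv2, hlab, hlαβ, mul_assoc, hg2]

lemma aux_span {s r : ℕ} (P : Fin s → MvPolynomial (Fin r) ℤ)
    (hnozero : ¬ ∃ z : Fin r → ℂ, ∀ i, eval z ((P i).map (Int.castRingHom ℂ)) = 0) :
    (1 : MvPolynomial (Fin r) ℚ) ∈
      Ideal.span (Set.range fun i => (P i).map (Int.castRingHom ℚ)) := by
  by_contra hone
  set J := Ideal.span (Set.range fun i => (P i).map (Int.castRingHom ℚ)) with hJdef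
  have hJ : J ≠ ⊤ := (Ideal.ne_top_iff_one J).mpr hone
  obtain ⟨m, hm, hJm⟩ := Ideal.exists_le_maximal J hJ
  letI : Field (MvPolynomial (Fin r) ℚ ⧸ m) := Ideal.Quotient.field m
  have hint : RingHom.IsIntegral ((Ideal.Quotient.mk m).comp MvPolynomial.C) :=
    MvPolynomial.quotient_mk_comp_C_isIntegral_of_isJacobsonRing m
  have halg : algebraMap ℚ (MvPolynomial (Fin r) ℚ ⧸ m)
      = (Ideal.Quotient.mk m).comp MvPolynomial.C := rfl
  haveI : Algebra.IsIntegral ℚ (MvPolynomial (Fin r) ℚ ⧸ m) := ⟨fun x => by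
    have := hint x
    rwa [← halg] at this⟩
  haveI : NoZeroSMulDivisors ℚ (MvPolynomial (Fin r) ℚ ⧸ m) :=
    inferInstance
  let φ : (MvPolynomial (Fin r) ℚ ⧸ m) →ₐ[ℚ] ℂ := IsAlgClosed.lift
  let ψ : MvPolynomial (Fin r) ℚ →+* ℂ := φ.toRingHom.comp (Ideal.Quotient.mk m)
  set z : Fin r → ℂ := fun j => ψ (X j) with hz
  have hψ : (eval₂Hom (ψ.comp C) z : MvPolynomial (Fin r) ℚ →+* ℂ) = ψ := by
    apply MvPolynomial.ringHom_ext
    · intro q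
      have h1 := φ.commutes q
      have h2 : algebraMap ℚ (MvPolynomial (Fin r) ℚ ⧸ m) q = Ideal.Quotient.mk m (C q) := by
        rw [halg]; rfl
      rw [h2] at h1
      simpa [ψ] using h1.symm
    · intro j
      simp [hz]
  apply hnozero
  refine ⟨z, fun i => ?_⟩
  have hmm : (P i).map (Int.castRingHom ℂ) = map (ψ.comp C) ((P i).map (Int.castRingHom ℚ)) := by
    rw [MvPolynomial.map_map, RingHom.ext_int ((ψ.comp C).comp (Int.castRingHom ℚ)) (Int.castRingHom ℂ)]
  rw [hmm, eval_map]
  have : eval₂ (ψ.comp C) z ((P i).map (Int.castRingHom ℚ))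
      = eval₂Hom (ψ.comp C) z ((P i).map (Int.castRingHom ℚ)) := rfl
  rw [this, hψ]
  have hmem : (P i).map (Int.castRingHom ℚ) ∈ m := hJm (Ideal.subset_span ⟨i, rfl⟩)
  show φ (Ideal.Quotient.mk m _) = 0
  rw [(Ideal.Quotient.eq_zero_iff_mem).mpr hmem, map_zero]

lemma aux_denom {r : ℕ} (q : MvPolynomial (Fin r) ℚ) :
    ∃ (d : ℤ) (q' : MvPolynomial (Fin r) ℤ), d ≠ 0 ∧
      C (d:ℚ) * q = map (Int.castRingHom ℚ) q' := by
  induction q using MvPolynomial.induction_on with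
  | C a =>
      refine ⟨(a.den : ℤ), C a.num, by exact_mod_cast a.den_nz, ?_⟩
      rw [map_C]
      rw [← C_mul]
      congr 1
      push_cast
      rw [mul_comm]
      exact_mod_cast Rat.mul_den_eq_num a
  | add p q hp hq =>
      obtain ⟨d1, q1, hd1, h1⟩ := hp
      obtain ⟨d2, q2, hd2, h2⟩ := hq
      refine ⟨d1 * d2, C d2 * q1 + C d1 * q2, mul_ne_zero hd1 hd2, ?_⟩
      rw [map_add, map_mul, map_mul, map_C, map_C, ← h1, ← h2]
      simp only [eq_intCast]
      rw [Int.cast_mul, C_mul]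
      ring
  | mul_X p j hp =>
      obtain ⟨d1, q1, hd1, h1⟩ := hp
      refine ⟨d1, q1 * X j, hd1, ?_⟩
      rw [map_mul, map_X, ← h1]
      ring

lemma aux_span' {s r : ℕ} (P : Fin s → MvPolynomial (Fin r) ℤ)
    (h : (1 : MvPolynomial (Fin r) ℚ) ∈
      Ideal.span (Set.range fun i => (P i).map (Int.castRingHom ℚ))) :
    ∃ N : ℤ, N ≠ 0 ∧ ∃ Q : Fin s → MvPolynomial (Fin r) ℤ,
      (C N : MvPolynomial (Fin r) ℤ) = ∑ i, Q i * P i := by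
  rw [Ideal.mem_span_range_iff_exists_fun] at h
  obtain ⟨Q, hQ⟩ := h
  choose d q' hd hq using fun i => aux_denom (Q i)
  set N : ℤ := ∏ i, d i with hN
  have hN0 : N ≠ 0 := Finset.prod_ne_zero_iff.mpr fun i _ => hd i
  set e : Fin s → ℤ := fun i => ∏ j ∈ Finset.univ.erase i, d j with he
  have hde : ∀ i, d i * e i = N := fun i => Finset.mul_prod_erase _ _ (Finset.mem_univ i)
  refine ⟨N, hN0, fun i => C (e i) * q' i, ?_⟩
  apply MvPolynomial.map_injective (Int.castRingHom ℚ) Int.cast_injective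
  rw [map_C]
  calc (C ((N:ℚ)) : MvPolynomial (Fin r) ℚ)
      = C (N:ℚ) * ∑ i, Q i * map (Int.castRingHom ℚ) (P i) := by rw [hQ, mul_one]
    _ = ∑ i, C ((e i : ℚ)) * (C ((d i : ℚ)) * Q i) * map (Int.castRingHom ℚ) (P i) := by
        rw [Finset.mul_sum]
        refine Finset.sum_congr rfl fun i _ => ?_
        have : (N : ℚ) = (e i : ℚ) * (d i : ℚ) := by
          rw [← hde i]; push_cast; ring
        rw [this, C_mul]; ring
    _ = ∑ i, C ((e i : ℚ)) * map (Int.castRingHom ℚ) (q' i) * map (Int.castRingHom ℚ) (P i) := by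
        refine Finset.sum_congr rfl fun i _ => ?_
        rw [hq i]
    _ = map (Int.castRingHom ℚ) (∑ i, C (e i) * q' i * P i) := by
        rw [map_sum]
        refine Finset.sum_congr rfl fun i _ => ?_
        rw [map_mul, map_mul, map_C]
        norm_num

lemma aux_eval_cast {r : ℕ} (p : MvPolynomial (Fin r) ℤ) (n : Fin r → ℤ) :
    eval (fun j => ((n j : ℤ) : ℂ)) (map (Int.castRingHom ℂ) p) = ((eval n p : ℤ) : ℂ) := by
  induction p using MvPolynomial.induction_on with
  | C a => simp
  | add p q hp hq => simp [hp, hq]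
  | mul_X p j hp => simp [hp]

lemma aux_finset_gcd_mem (S : Set ℤ) (hpos : ∀ x ∈ S, 0 < x)
    (hcl : ∀ x ∈ S, ∀ y ∈ S, gcd x y ∈ S) :
    ∀ T : Finset ℤ, T.Nonempty → ↑T ⊆ S → T.gcd id ∈ S := by
  intro T
  induction T using Finset.induction_on with
  | empty => intro h; exact absurd rfl h.ne_empty
  | @insert a T' ha IH =>
      intro _ hsub
      have haS : a ∈ S := hsub (Finset.mem_coe.mpr (Finset.mem_insert_self a T'))
      rcases T'.eq_empty_or_nonempty with h | h
      · subst h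
        rw [Finset.gcd_insert, Finset.gcd_empty, gcd_zero_right, id,
          Int.normalize_of_nonneg (le_of_lt (hpos a haS))]
        exact haS
      · have hT'S : ↑T' ⊆ S := fun x hx => hsub (Finset.mem_coe.mpr (Finset.mem_insert_of_mem hx))
        rw [Finset.gcd_insert]
        exact hcl a haS _ (IH h hT'S)

lemma aux_finset_lcm_mem (S : Set ℤ) (hpos : ∀ x ∈ S, 0 < x)
    (hcl : ∀ x ∈ S, ∀ y ∈ S, lcm x y ∈ S) :
    ∀ T : Finset ℤ, T.Nonempty → ↑T ⊆ S → T.lcm id ∈ S := by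
  intro T
  induction T using Finset.induction_on with
  | empty => intro h; exact absurd rfl h.ne_empty
  | @insert a T' ha IH =>
      intro _ hsub
      have haS : a ∈ S := hsub (Finset.mem_coe.mpr (Finset.mem_insert_self a T'))
      rcases T'.eq_empty_or_nonempty with h | h
      · subst h
        rw [Finset.lcm_insert, Finset.lcm_empty, lcm_one_right, id,
          Int.normalize_of_nonneg (le_of_lt (hpos a haS))]
        exact haS
      · have hT'S : ↑T' ⊆ S := fun x hx => hsub (Finset.mem_coe.mpr (Finset.mem_insert_of_mem hx))
        rw [Finset.lcm_insert]
        exact hcl a haS _ (IH h hT'S)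

lemma aux_cast_gcd (a b : ℕ) : gcd (a:ℤ) (b:ℤ) = ((Nat.gcd a b : ℕ) : ℤ) := by
  rw [← Int.coe_gcd, Int.gcd_natCast_natCast]

lemma aux_cast_lcm (a b : ℕ) : lcm (a:ℤ) (b:ℤ) = ((Nat.lcm a b : ℕ) : ℤ) := by
  rw [← Int.coe_lcm]
  norm_num [Int.lcm]
theorem stmt2 (s r : ℕ) (hs : 2 ≤ s) (hr : 1 ≤ r)
    (P : Fin s → MvPolynomial (Fin r) ℤ)
    (hP : ∀ i, P i ≠ 0)
    (hnozero : ¬ ∃ z : Fin r → ℂ, ∀ i, eval z ((P i).map (Int.castRingHom ℂ)) = 0) :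
    (Set.range fun n : Fin r → ℤ => Finset.univ.gcd fun i => eval n (P i)).Finite ∧
    (∀ x ∈ (Set.range fun n : Fin r → ℤ => Finset.univ.gcd fun i => eval n (P i)), 0 < x) ∧
    (∀ n m : Fin r → ℤ, ∃ n' : Fin r → ℤ,
      gcd (Finset.univ.gcd fun i => eval n (P i)) (Finset.univ.gcd fun i => eval m (P i))
        = Finset.univ.gcd fun i => eval n' (P i)) ∧
    (∀ n m : Fin r → ℤ, ∃ n'' : Fin r → ℤ,
      lcm (Finset.univ.gcd fun i => eval n (P i)) (Finset.univ.gcd fun i => eval m (P i))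
        = Finset.univ.gcd fun i => eval n'' (P i)) ∧
    (∃ a : ℤ, IsLeast (Set.range fun n : Fin r → ℤ => Finset.univ.gcd fun i => eval n (P i)) a ∧
      ∀ e ∈ (Set.range fun n : Fin r → ℤ => Finset.univ.gcd fun i => eval n (P i)), a ∣ e) ∧
    (∃ b : ℤ, IsGreatest (Set.range fun n : Fin r → ℤ => Finset.univ.gcd fun i => eval n (P i)) b ∧
      ∀ e ∈ (Set.range fun n : Fin r → ℤ => Finset.univ.gcd fun i => eval n (P i)), e ∣ b) := by
  classical
  set F : (Fin r → ℤ) → ℤ := fun n => Finset.univ.gcd fun i => eval n (P i) with hFdef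
  -- the universal multiple N
  obtain ⟨N, hN0, Q, hNQ⟩ := aux_span' P (aux_span P hnozero)
  have hdvdN : ∀ n, F n ∣ N := by
    intro n
    have h1 := congrArg (eval n) hNQ
    rw [eval_C, map_sum] at h1
    rw [h1]
    apply Finset.dvd_sum
    intro i _
    rw [eval_mul]
    exact Dvd.dvd.mul_left (Finset.gcd_dvd (Finset.mem_univ i)) _
  -- nonnegativity & positivity
  have hFnonneg : ∀ n, 0 ≤ F n := by
    intro n
    show 0 ≤ Finset.univ.gcd fun i => eval n (P i)
    rw [← Finset.normalize_gcd, ← Int.abs_eq_normalize]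
    exact abs_nonneg _
  have hFpos : ∀ n, 0 < F n := by
    intro n
    rcases lt_or_eq_of_le (hFnonneg n) with h | h
    · exact h
    · exfalso
      apply hnozero
      refine ⟨fun j => ((n j : ℤ) : ℂ), fun i => ?_⟩
      rw [aux_eval_cast]
      have : eval n (P i) = 0 := by
        have h0 : F n = 0 := h.symm
        rw [hFdef] at h0
        exact Finset.gcd_eq_zero_iff.mp h0 i (Finset.mem_univ i)
      rw [this, Int.cast_zero]
  set dN : (Fin r → ℤ) → ℕ := fun n => (F n).natAbs with hdN
  have hcast : ∀ n, ((dN n : ℕ) : ℤ) = F n := fun n => Int.natAbs_of_nonneg (hFnonneg n)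
  set D : ℕ := N.natAbs with hD
  have hD0 : D ≠ 0 := Int.natAbs_ne_zero.mpr hN0
  have hdvdD : ∀ n, dN n ∣ D := fun n => Int.natAbs_dvd_natAbs.mpr (hdvdN n)
  -- congruence
  have hcongr : ∀ (u : ℕ) (n m : Fin r → ℤ), (∀ j, (u:ℤ) ∣ n j - m j) →
      Nat.gcd u (dN n) = Nat.gcd u (dN m) := by
    intro u n m h
    have h1 := aux_gcd_congr (fun i => eval n (P i)) (fun i => eval m (P i)) (u:ℤ)
      (fun i => aux_eval_congr (P i) (u:ℤ) n m h)
    have h2 : gcd ((u:ℕ):ℤ) ((dN n : ℕ) : ℤ) = gcd ((u:ℕ):ℤ) ((dN m : ℕ):ℤ) := by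
      rw [hcast, hcast]; exact h1
    rw [aux_cast_gcd, aux_cast_gcd] at h2
    exact_mod_cast h2
  -- common core for gcd and lcm stability
  have hkey : ∀ (u v : ℕ), u * v = D → Nat.Coprime u v → ∀ n m : Fin r → ℤ,
      ∃ x : Fin r → ℤ, dN x = Nat.gcd (dN n) u * Nat.gcd (dN m) v := by
    intro u v huv hcop n m
    have hch : ∀ j, ∃ t : ℤ, (u:ℤ) ∣ t - n j ∧ (v:ℤ) ∣ t - m j :=
      fun j => aux_crt u v hcop (n j) (m j)
    choose x hx1 hx2 using hch
    refine ⟨x, ?_⟩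
    have c1 : Nat.gcd u (dN x) = Nat.gcd u (dN n) := hcongr u x n hx1
    have c2 : Nat.gcd v (dN x) = Nat.gcd v (dN m) := hcongr v x m hx2
    have hxuv : dN x ∣ u * v := huv ▸ hdvdD x
    have hsplit : dN x = Nat.gcd (dN x) u * Nat.gcd (dN x) v := by
      conv_lhs => rw [← Nat.gcd_eq_left hxuv]
      rw [Nat.Coprime.gcd_mul _ hcop]
    rw [hsplit, Nat.gcd_comm (dN x) u, Nat.gcd_comm (dN x) v, c1, c2,
      Nat.gcd_comm u (dN n), Nat.gcd_comm v (dN m)]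
  -- gcd stability
  have hgcdcl : ∀ n m : Fin r → ℤ, ∃ n' : Fin r → ℤ, gcd (F n) (F m) = F n' := by
    intro n m
    obtain ⟨⟨u, v, huv, hcop, hg⟩, -⟩ :=
      aux_split D hD0 (dN n) (dN m) (hdvdD n) (hdvdD m)
    obtain ⟨x, hx⟩ := hkey u v huv hcop n m
    refine ⟨x, ?_⟩
    rw [← hcast n, ← hcast m, aux_cast_gcd, ← hcast x]
    congr 1
    rw [hx, hg]
  have hlcmcl : ∀ n m : Fin r → ℤ, ∃ n' : Fin r → ℤ, lcm (F n) (F m) = F n' := by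
    intro n m
    obtain ⟨-, ⟨u, v, huv, hcop, hg⟩⟩ :=
      aux_split D hD0 (dN n) (dN m) (hdvdD n) (hdvdD m)
    obtain ⟨x, hx⟩ := hkey u v huv hcop n m
    refine ⟨x, ?_⟩
    rw [← hcast n, ← hcast m, aux_cast_lcm, ← hcast x]
    congr 1
    rw [hx, hg]
  -- finiteness
  have hfin : (Set.range F).Finite := by
    apply (Set.finite_Icc (1:ℤ) (D:ℤ)).subset
    rintro x ⟨n, rfl⟩
    refine Set.mem_Icc.mpr ⟨hFpos n, ?_⟩
    rw [← hcast n]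
    exact_mod_cast Nat.le_of_dvd (Nat.pos_of_ne_zero hD0) (hdvdD n)
  have hposall : ∀ x ∈ Set.range F, 0 < x := by
    rintro x ⟨n, rfl⟩; exact hFpos n
  -- extremal elements
  set T : Finset ℤ := hfin.toFinset with hT
  have hTmem : ∀ x, x ∈ T ↔ x ∈ Set.range F := fun x => Set.Finite.mem_toFinset hfin
  have hTsub : ↑T ⊆ Set.range F := fun x hx => (hTmem x).mp hx
  have hTne : T.Nonempty := ⟨F (fun _ => 0), (hTmem _).mpr ⟨_, rfl⟩⟩
  have hclS : ∀ x ∈ Set.range F, ∀ y ∈ Set.range F, gcd x y ∈ Set.range F := by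
    rintro x ⟨n, rfl⟩ y ⟨m, rfl⟩
    obtain ⟨n', hn'⟩ := hgcdcl n m
    exact ⟨n', hn'.symm⟩
  have hclS' : ∀ x ∈ Set.range F, ∀ y ∈ Set.range F, lcm x y ∈ Set.range F := by
    rintro x ⟨n, rfl⟩ y ⟨m, rfl⟩
    obtain ⟨n', hn'⟩ := hlcmcl n m
    exact ⟨n', hn'.symm⟩
  have hamem : T.gcd id ∈ Set.range F :=
    aux_finset_gcd_mem (Set.range F) hposall hclS T hTne hTsub
  have hbmem : T.lcm id ∈ Set.range F :=
    aux_finset_lcm_mem (Set.range F) hposall hclS' T hTne hTsub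
  have hadvd : ∀ e ∈ Set.range F, T.gcd id ∣ e := by
    intro e he
    exact Finset.gcd_dvd ((hTmem e).mpr he)
  have hbdvd : ∀ e ∈ Set.range F, e ∣ T.lcm id := by
    intro e he
    exact Finset.dvd_lcm ((hTmem e).mpr he)
  refine ⟨hfin, hposall, hgcdcl, hlcmcl,
    ⟨T.gcd id, ⟨hamem, fun e he => Int.le_of_dvd (hposall e he) (hadvd e he)⟩, hadvd⟩,
    ⟨T.lcm id, ⟨hbmem, fun e he => Int.le_of_dvd (hposall _ hbmem) (hbdvd e he)⟩, hbdvd⟩⟩
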